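/- Let s > 0 and let f : ℝ → ℝ be continuously differentiable on [0,1]. Then the double integral below converges absolutely and ∫₀¹ β_s(θ) ∫₀¹ u^{−1}(1−u)^{2s−1} [ f((1−u)θ) + f(u + (1−u)θ) − 2 f(θ) ] du dθ = 0, where β_s(θ) = θ^{2s−1}(1−θ)^{2s−1}/B(2s,2s). In other words, the Beta(2s,2s) distribution is stationary for the single-site hidden-parameter model of the generalized harmonic process with parameter s coupled to reservoirs with parameters θ_L = 0 and θ_R = 1. -/

import Mathlib

open MeasureTheory Real Set

/-- The Beta(2s,2s) density on (0,1). -/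
noncomputable def betaDens (s θ : ℝ) : ℝ :=
  θ ^ (2 * s - 1) * (1 - θ) ^ (2 * s - 1) /
    ∫ v in Set.Ioo (0 : ℝ) 1, v ^ (2 * s - 1) * (1 - v) ^ (2 * s - 1)

private lemma integrableOn_rpow01 {p : ℝ} (hp : -1 < p) :
    IntegrableOn (fun x : ℝ => x ^ p) (Set.Ioo 0 1) volume := by
  have h := intervalIntegral.intervalIntegrable_rpow' (a := 0) (b := 1) hp
  rwa [intervalIntegrable_iff_integrableOn_Ioo_of_le zero_le_one] at h

private lemma integrableOn_one_sub_rpow01 {p : ℝ} (hp : -1 < p) :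
    IntegrableOn (fun x : ℝ => (1 - x) ^ p) (Set.Ioo 0 1) volume := by
  have h := (intervalIntegral.intervalIntegrable_rpow' (a := 0) (b := 1) hp).comp_sub_left 1
  simp only [sub_zero, sub_self] at h
  have h2 := h.symm
  rwa [intervalIntegrable_iff_integrableOn_Ioo_of_le zero_le_one] at h2

private lemma betaKer_integrableOn {p : ℝ} (hp : -1 < p) :
    IntegrableOn (fun x : ℝ => x ^ p * (1 - x) ^ p) (Set.Ioo 0 1) volume := by
  set K : ℝ := max 1 ((1/2 : ℝ) ^ p) with hK
  have hK1 : (1:ℝ) ≤ K := le_max_left _ _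
  have hKh : ((1/2 : ℝ) ^ p) ≤ K := le_max_right _ _
  have h1 : IntegrableOn (fun x : ℝ => x ^ p * (1 - x) ^ p) (Set.Ioc 0 (1/2)) volume := by
    refine Integrable.mono' (((integrableOn_rpow01 hp).mono_set ?_).const_mul K) ?_ ?_
    · intro x hx; exact ⟨hx.1, lt_of_le_of_lt hx.2 (by norm_num)⟩
    · refine ContinuousOn.aestronglyMeasurable ?_ measurableSet_Ioc
      refine ContinuousOn.mul ?_ ?_
      · exact continuousOn_id.rpow_const fun x hx => Or.inl (ne_of_gt hx.1)
      · exact (continuousOn_const.sub continuousOn_id).rpow_const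
          fun x hx => Or.inl (by simp only [Pi.sub_apply, id]; intro h; nlinarith [hx.2])
    · refine (ae_restrict_iff' measurableSet_Ioc).2 (ae_of_all _ fun x hx => ?_)
      have hx0 : (0:ℝ) < x := hx.1
      have hx2 : x ≤ 1/2 := hx.2
      have h1x : (1/2 : ℝ) ≤ 1 - x := by linarith
      have hb : (1 - x) ^ p ≤ K := by
        rcases le_or_gt 0 p with h | h
        · exact le_trans (Real.rpow_le_one (by linarith) (by linarith) h) hK1
        · exact le_trans (Real.rpow_le_rpow_of_nonpos (by norm_num) h1x h.le) hKh
      have hxp : (0:ℝ) < x ^ p := Real.rpow_pos_of_pos hx0 p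
      rw [Real.norm_eq_abs, abs_mul, abs_of_pos hxp,
        abs_of_pos (Real.rpow_pos_of_pos (by linarith : (0:ℝ) < 1 - x) p)]
      calc x ^ p * (1-x) ^ p ≤ x ^ p * K := by nlinarith
        _ = K * x ^ p := by ring
  have h2 : IntegrableOn (fun x : ℝ => x ^ p * (1 - x) ^ p) (Set.Ioo (1/2) 1) volume := by
    refine Integrable.mono' (((integrableOn_one_sub_rpow01 hp).mono_set ?_).const_mul K) ?_ ?_
    · intro x hx; exact ⟨lt_trans (by norm_num) hx.1, hx.2⟩
    · refine ContinuousOn.aestronglyMeasurable ?_ measurableSet_Ioo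
      refine ContinuousOn.mul ?_ ?_
      · exact continuousOn_id.rpow_const fun x hx =>
          Or.inl (ne_of_gt (lt_trans (by norm_num) hx.1))
      · exact (continuousOn_const.sub continuousOn_id).rpow_const
          fun x hx => Or.inl (by simp only [Pi.sub_apply, id]; intro h; nlinarith [hx.2])
    · refine (ae_restrict_iff' measurableSet_Ioo).2 (ae_of_all _ fun x hx => ?_)
      have hx0 : (1/2:ℝ) < x := hx.1
      have hx2 : x < 1 := hx.2
      have hb : x ^ p ≤ K := by
        rcases le_or_gt 0 p with h | h
        · exact le_trans (Real.rpow_le_one (by linarith) (by linarith) h) hK1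
        · exact le_trans (Real.rpow_le_rpow_of_nonpos (by norm_num) hx0.le h.le) hKh
      have hxp : (0:ℝ) < (1-x) ^ p := Real.rpow_pos_of_pos (by linarith) p
      rw [Real.norm_eq_abs, abs_mul, abs_of_pos (Real.rpow_pos_of_pos (by linarith) p),
        abs_of_pos hxp]
      nlinarith
  refine (h1.union h2).mono_set ?_
  intro x hx
  rcases le_or_gt x (1/2) with h | h
  · exact Or.inl ⟨hx.1, h⟩
  · exact Or.inr ⟨h, hx.2⟩

private lemma bound_aux {C p u d : ℝ} (hu : u ∈ Set.Ioo (0:ℝ) 1) (hd : |d| ≤ C * u) :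
    |u⁻¹ * (1 - u) ^ p * d| ≤ C * (1 - u) ^ p := by
  have h0 : (0:ℝ) < u := hu.1
  have hP : (0:ℝ) < (1 - u) ^ p := Real.rpow_pos_of_pos (by linarith [hu.2]) p
  rw [abs_mul, abs_mul, abs_inv, abs_of_pos h0, abs_of_pos hP]
  calc u⁻¹ * (1 - u) ^ p * |d| ≤ u⁻¹ * (1 - u) ^ p * (C * u) :=
        mul_le_mul_of_nonneg_left hd (by positivity)
    _ = C * (1 - u) ^ p := by field_simp


private lemma aux_integrableOn {C p : ℝ} (hp : -1 < p) {g : ℝ → ℝ}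
    (hg : ContinuousOn g (Set.Ioo 0 1)) (hb : ∀ u ∈ Set.Ioo (0:ℝ) 1, |g u| ≤ C * u) :
    IntegrableOn (fun u : ℝ => u⁻¹ * (1 - u) ^ p * g u) (Set.Ioo 0 1) volume := by
  refine Integrable.mono' ((integrableOn_one_sub_rpow01 hp).const_mul C) ?_ ?_
  · refine ContinuousOn.aestronglyMeasurable ?_ measurableSet_Ioo
    refine ContinuousOn.mul (ContinuousOn.mul ?_ ?_) hg
    · exact continuousOn_id.inv₀ fun u hu => ne_of_gt hu.1
    · exact (continuousOn_const.sub continuousOn_id).rpow_const fun u hu =>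
        Or.inl (by simp only [Pi.sub_apply, id]; intro h; nlinarith [hu.2])
  · exact (ae_restrict_iff' measurableSet_Ioo).2 (ae_of_all _ fun u hu => by
      rw [Real.norm_eq_abs]; exact bound_aux hu (hb u hu))

private lemma key_pointwise {p C : ℝ} (hp : -1 < p) (hC0 : 0 ≤ C) {f : ℝ → ℝ}
    (hfc : ContinuousOn f (Set.Icc 0 1))
    (hC : ∀ a ∈ Set.Icc (0:ℝ) 1, ∀ b ∈ Set.Icc (0:ℝ) 1, |f b - f a| ≤ C * |b - a|)
    {θ : ℝ} (hθ : θ ∈ Set.Ioo (0:ℝ) 1) :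
    θ ^ p * (1 - θ) ^ p *
        (∫ u in Set.Ioo (0:ℝ) 1, u⁻¹ * (1 - u) ^ p *
          (f ((1 - u) * θ) + f (u + (1 - u) * θ) - 2 * f θ))
      = (∫ y in Set.Ioo θ 1, θ ^ p * (1 - y) ^ p * (f y - f θ) / (y - θ))
        - (∫ x in Set.Ioo 0 θ, x ^ p * (1 - θ) ^ p * (f θ - f x) / (θ - x)) := by
  obtain ⟨hθ0, hθ1⟩ := hθ
  have h1θ : (0:ℝ) < 1 - θ := by linarith
  have hθI : θ ∈ Set.Icc (0:ℝ) 1 := ⟨hθ0.le, hθ1.le⟩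
  set g : ℝ → ℝ := fun u => u⁻¹ * (1 - u) ^ p * (f (u + (1 - u) * θ) - f θ) with hg
  set h : ℝ → ℝ := fun u => u⁻¹ * (1 - u) ^ p * (f θ - f ((1 - u) * θ)) with hh
  have hmapg : ∀ u ∈ Set.Ioo (0:ℝ) 1, u + (1 - u) * θ ∈ Set.Icc (0:ℝ) 1 := by
    intro u hu; obtain ⟨h1, h2⟩ := hu
    constructor <;> nlinarith
  have hmaph : ∀ u ∈ Set.Ioo (0:ℝ) 1, (1 - u) * θ ∈ Set.Icc (0:ℝ) 1 := by
    intro u hu; obtain ⟨h1, h2⟩ := hu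
    constructor <;> nlinarith
  have hgint : IntegrableOn g (Set.Ioo 0 1) volume := by
    refine aux_integrableOn (C := C) hp ?_ ?_
    · exact (hfc.comp (by fun_prop) hmapg).sub continuousOn_const
    · intro u hu
      have h1 := hC θ hθI _ (hmapg u hu)
      have he : |u + (1 - u) * θ - θ| = u * (1 - θ) := by
        rw [abs_of_nonneg] <;> nlinarith [hu.1, hu.2]
      rw [he] at h1
      calc |f (u + (1 - u) * θ) - f θ| ≤ C * (u * (1 - θ)) := h1
        _ ≤ C * u := by nlinarith [mul_nonneg (mul_nonneg hC0 hu.1.le) hθ0.le]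
  have hhint : IntegrableOn h (Set.Ioo 0 1) volume := by
    refine aux_integrableOn (C := C) hp ?_ ?_
    · exact continuousOn_const.sub (hfc.comp (by fun_prop) hmaph)
    · intro u hu
      have h1 := hC _ (hmaph u hu) θ hθI
      have he : |θ - (1 - u) * θ| = u * θ := by
        rw [abs_of_nonneg] <;> nlinarith [hu.1, hu.2]
      rw [he] at h1
      calc |f θ - f ((1 - u) * θ)| ≤ C * (u * θ) := h1
        _ ≤ C * u := by nlinarith [mul_nonneg (mul_nonneg hC0 hu.1.le) h1θ.le]
  have hsplit : (∫ u in Set.Ioo (0:ℝ) 1, u⁻¹ * (1 - u) ^ p *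
      (f ((1 - u) * θ) + f (u + (1 - u) * θ) - 2 * f θ))
      = (∫ u in Set.Ioo (0:ℝ) 1, g u) - ∫ u in Set.Ioo (0:ℝ) 1, h u := by
    rw [← integral_sub hgint hhint]
    refine setIntegral_congr_fun measurableSet_Ioo fun u hu => ?_
    simp only [hg, hh]; ring
  rw [hsplit, mul_sub]
  have hplus : θ ^ p * (1 - θ) ^ p * (∫ u in Set.Ioo (0:ℝ) 1, g u)
      = ∫ y in Set.Ioo θ 1, θ ^ p * (1 - y) ^ p * (f y - f θ) / (y - θ) := by
    have e01 : (∫ u in Set.Ioo (0:ℝ) 1, g u) = ∫ u in (0:ℝ)..1, g u := by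
      rw [intervalIntegral.integral_of_le zero_le_one, integral_Ioc_eq_integral_Ioo]
    set c : ℝ := (1 - θ)⁻¹ with hcdef
    set d : ℝ := -(θ * (1 - θ)⁻¹) with hddef
    have hc : c ≠ 0 := inv_ne_zero (ne_of_gt h1θ)
    have hsub := intervalIntegral.integral_comp_mul_add (a := θ) (b := 1) (f := g) hc d
    have e1 : c * θ + d = 0 := by rw [hcdef, hddef]; field_simp; ring
    have e2 : c * 1 + d = 1 := by rw [hcdef, hddef]; field_simp; ring
    rw [e1, e2] at hsub
    have e3 : (∫ x in (0:ℝ)..1, g x) = (1 - θ)⁻¹ * ∫ y in θ..1, g (c * y + d) := by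
      rw [hsub, smul_eq_mul, hcdef]
      rw [inv_inv]
      field_simp
    have e4 : (∫ y in θ..1, g (c * y + d)) = ∫ y in Set.Ioo θ 1, g (c * y + d) := by
      rw [intervalIntegral.integral_of_le hθ1.le, integral_Ioc_eq_integral_Ioo]
    rw [e01, e3, e4, ← mul_assoc, ← integral_const_mul]
    refine setIntegral_congr_fun measurableSet_Ioo fun y hy => ?_
    obtain ⟨hy1, hy2⟩ := hy
    have hyθ : (0:ℝ) < y - θ := by linarith
    have h1y : (0:ℝ) ≤ 1 - y := by linarith
    have hu : c * y + d = (y - θ) / (1 - θ) := by rw [hcdef, hddef]; field_simp; ring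
    simp only [hg, hu]
    have harg : (y - θ) / (1 - θ) + (1 - (y - θ) / (1 - θ)) * θ = y := by
      field_simp; ring
    have h1u : 1 - (y - θ) / (1 - θ) = (1 - y) / (1 - θ) := by
      field_simp; ring
    rw [harg, h1u, Real.div_rpow h1y h1θ.le]
    have hP : ((1:ℝ) - θ) ^ p ≠ 0 := ne_of_gt (Real.rpow_pos_of_pos h1θ p)
    field_simp
  have hminus : θ ^ p * (1 - θ) ^ p * (∫ u in Set.Ioo (0:ℝ) 1, h u)
      = ∫ x in Set.Ioo 0 θ, x ^ p * (1 - θ) ^ p * (f θ - f x) / (θ - x) := by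
    have e01 : (∫ u in Set.Ioo (0:ℝ) 1, h u) = ∫ u in (0:ℝ)..1, h u := by
      rw [intervalIntegral.integral_of_le zero_le_one, integral_Ioc_eq_integral_Ioo]
    set c : ℝ := -θ⁻¹ with hcdef
    have hc : c ≠ 0 := neg_ne_zero.2 (inv_ne_zero (ne_of_gt hθ0))
    have hsub := intervalIntegral.integral_comp_mul_add (a := (0:ℝ)) (b := θ) (f := h) hc 1
    have e1 : c * 0 + 1 = 1 := by ring
    have e2 : c * θ + 1 = 0 := by rw [hcdef]; field_simp; norm_num
    rw [e1, e2, intervalIntegral.integral_symm (a := (0:ℝ)) (b := 1)] at hsub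
    have e3 : (∫ x in (0:ℝ)..1, h x) = θ⁻¹ * ∫ y in (0:ℝ)..θ, h (c * y + 1) := by
      rw [hsub, smul_eq_mul, hcdef]
      field_simp
    have e4 : (∫ y in (0:ℝ)..θ, h (c * y + 1)) = ∫ y in Set.Ioo 0 θ, h (c * y + 1) := by
      rw [intervalIntegral.integral_of_le hθ0.le, integral_Ioc_eq_integral_Ioo]
    rw [e01, e3, e4, ← mul_assoc, ← integral_const_mul]
    refine setIntegral_congr_fun measurableSet_Ioo fun y hy => ?_
    obtain ⟨hy1, hy2⟩ := hy
    have hθy : (0:ℝ) < θ - y := by linarith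
    have hu : c * y + 1 = (θ - y) / θ := by rw [hcdef]; field_simp; ring
    simp only [hh, hu]
    have harg : (1 - (θ - y) / θ) * θ = y := by field_simp; ring
    have h1u : 1 - (θ - y) / θ = y / θ := by field_simp; ring
    rw [harg, h1u, Real.div_rpow hy1.le hθ0.le]
    have hP : (θ:ℝ) ^ p ≠ 0 := ne_of_gt (Real.rpow_pos_of_pos hθ0 p)
    field_simp
  rw [hplus, hminus]

private lemma fubini_core {p C : ℝ} (hp : -1 < p) (hC0 : 0 ≤ C) {f : ℝ → ℝ}
    (hfc : ContinuousOn f (Set.Icc 0 1))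
    (hC : ∀ a ∈ Set.Icc (0:ℝ) 1, ∀ b ∈ Set.Icc (0:ℝ) 1, |f b - f a| ≤ C * |b - a|) :
    IntegrableOn (fun θ => ∫ y in Set.Ioo θ 1,
        θ ^ p * (1 - y) ^ p * (f y - f θ) / (y - θ)) (Set.Ioo 0 1) volume ∧
    IntegrableOn (fun θ => ∫ x in Set.Ioo 0 θ,
        x ^ p * (1 - θ) ^ p * (f θ - f x) / (θ - x)) (Set.Ioo 0 1) volume ∧
    (∫ θ in Set.Ioo (0:ℝ) 1, ∫ y in Set.Ioo θ 1, θ ^ p * (1 - y) ^ p * (f y - f θ) / (y - θ))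
      = ∫ θ in Set.Ioo (0:ℝ) 1, ∫ x in Set.Ioo 0 θ,
          x ^ p * (1 - θ) ^ p * (f θ - f x) / (θ - x) := by
  set I : Set ℝ := Set.Ioo 0 1 with hI
  set ν : Measure ℝ := volume.restrict I with hν
  set G : ℝ × ℝ → ℝ := fun z => z.1 ^ p * (1 - z.2) ^ p * (f z.2 - f z.1) / (z.2 - z.1)
    with hG
  set T : Set (ℝ × ℝ) := {z | z.1 < z.2} with hT
  have hTmeas : MeasurableSet T := measurableSet_lt measurable_fst measurable_snd
  have hsq : MeasurableSet (I ×ˢ I) := measurableSet_Ioo.prod measurableSet_Ioo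
  have hrestr : ∀ (S : Set (ℝ × ℝ)), MeasurableSet S →
      (ν.prod ν).restrict S = (volume : Measure (ℝ × ℝ)).restrict (S ∩ I ×ˢ I) := by
    intro S hS
    rw [hν, Measure.prod_restrict, ← Measure.volume_eq_prod, Measure.restrict_restrict hS]
  have hprod : (ν.prod ν) = (volume : Measure (ℝ × ℝ)).restrict (I ×ˢ I) := by
    rw [hν, Measure.prod_restrict, ← Measure.volume_eq_prod]
  -- bound function integrable on product
  have hbnd : Integrable (fun z : ℝ × ℝ => (C * z.1 ^ p) * (1 - z.2) ^ p) (ν.prod ν) :=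
    Integrable.mul_prod ((integrableOn_rpow01 hp).const_mul C)
      (integrableOn_one_sub_rpow01 hp)
  -- continuity of G on T ∩ I ×ˢ I
  have hGcont : ContinuousOn G (T ∩ I ×ˢ I) := by
    have hmap1 : ∀ z ∈ T ∩ I ×ˢ I, z.1 ∈ Set.Icc (0:ℝ) 1 := fun z hz =>
      ⟨hz.2.1.1.le, hz.2.1.2.le⟩
    have hmap2 : ∀ z ∈ T ∩ I ×ˢ I, z.2 ∈ Set.Icc (0:ℝ) 1 := fun z hz =>
      ⟨hz.2.2.1.le, hz.2.2.2.le⟩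
    refine ContinuousOn.div ?_ ?_ ?_
    · refine ContinuousOn.mul (ContinuousOn.mul ?_ ?_) ?_
      · exact continuous_fst.continuousOn.rpow_const fun z hz =>
          Or.inl (ne_of_gt hz.2.1.1)
      · exact (continuousOn_const.sub continuous_snd.continuousOn).rpow_const fun z hz =>
          Or.inl (by intro h; simp only [Pi.sub_apply] at h; nlinarith [hz.2.2.2, h])
      · exact (hfc.comp continuous_snd.continuousOn hmap2).sub
          (hfc.comp continuous_fst.continuousOn hmap1)
    · exact (continuous_snd.sub continuous_fst).continuousOn
    · exact fun z hz => ne_of_gt (by have := hz.1; simpa [hT, sub_pos] using this)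
  -- the indicator function is integrable on the product
  have hH : Integrable (T.indicator G) (ν.prod ν) := by
    rw [integrable_indicator_iff hTmeas]
    refine Integrable.mono' (hbnd.restrict (s := T)) ?_ ?_
    · rw [hrestr T hTmeas]
      exact hGcont.aestronglyMeasurable (hTmeas.inter hsq)
    · rw [hrestr T hTmeas]
      refine (ae_restrict_iff' (hTmeas.inter hsq)).2 (ae_of_all _ fun z hz => ?_)
      obtain ⟨hzT, hz1, hz2⟩ := hz
      have hab : z.1 < z.2 := hzT
      have ha0 : (0:ℝ) < z.1 := hz1.1
      have hb1 : z.2 < 1 := hz2.2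
      have hba : (0:ℝ) < z.2 - z.1 := by linarith
      have hap : (0:ℝ) < z.1 ^ p := Real.rpow_pos_of_pos ha0 p
      have hbp : (0:ℝ) < (1 - z.2) ^ p := Real.rpow_pos_of_pos (by linarith) p
      have hfb : |f z.2 - f z.1| ≤ C * (z.2 - z.1) := by
        have h := hC z.1 ⟨ha0.le, (lt_trans hab hb1).le⟩ z.2 ⟨(lt_trans ha0 hab).le, hb1.le⟩
        rwa [abs_of_pos hba] at h
      rw [Real.norm_eq_abs, hG]
      simp only
      rw [abs_div, abs_mul, abs_mul, abs_of_pos hap, abs_of_pos hbp, abs_of_pos hba,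
        div_le_iff₀ hba]
      calc z.1 ^ p * (1 - z.2) ^ p * |f z.2 - f z.1|
          ≤ z.1 ^ p * (1 - z.2) ^ p * (C * (z.2 - z.1)) :=
            mul_le_mul_of_nonneg_left hfb (by positivity)
        _ = C * z.1 ^ p * (1 - z.2) ^ p * (z.2 - z.1) := by ring
  -- identify the sections
  have hsec1 : ∀ θ ∈ I, (∫ y, T.indicator G (θ, y) ∂ν)
      = ∫ y in Set.Ioo θ 1, θ ^ p * (1 - y) ^ p * (f y - f θ) / (y - θ) := by
    intro θ hθ
    have h1 : (fun y => T.indicator G (θ, y))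
        = (Set.Ioi θ).indicator (fun y => θ ^ p * (1 - y) ^ p * (f y - f θ) / (y - θ)) := by
      funext y
      by_cases hy : θ < y
      · simp [Set.indicator_apply, hT, hG, hy]
      · simp [Set.indicator_apply, hT, hG, hy]
    have hset : Set.Ioi θ ∩ I = Set.Ioo θ 1 := by
      ext y
      simp only [hI, Set.mem_inter_iff, Set.mem_Ioi, Set.mem_Ioo]
      constructor
      · rintro ⟨h1, h2, h3⟩; exact ⟨h1, h3⟩
      · rintro ⟨h1, h2⟩; exact ⟨h1, lt_trans hθ.1 h1, h2⟩
    rw [h1, integral_indicator measurableSet_Ioi, hν,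
      Measure.restrict_restrict measurableSet_Ioi, hset]
  have hsec2 : ∀ θ ∈ I, (∫ x, T.indicator G (x, θ) ∂ν)
      = ∫ x in Set.Ioo 0 θ, x ^ p * (1 - θ) ^ p * (f θ - f x) / (θ - x) := by
    intro θ hθ
    have h1 : (fun x => T.indicator G (x, θ))
        = (Set.Iio θ).indicator (fun x => x ^ p * (1 - θ) ^ p * (f θ - f x) / (θ - x)) := by
      funext x
      by_cases hx : x < θ
      · simp [Set.indicator_apply, hT, hG, hx]
      · simp [Set.indicator_apply, hT, hG, hx]
    have hset : Set.Iio θ ∩ I = Set.Ioo 0 θ := by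
      ext x
      simp only [hI, Set.mem_inter_iff, Set.mem_Iio, Set.mem_Ioo]
      constructor
      · rintro ⟨h1, h2, h3⟩; exact ⟨h2, h1⟩
      · rintro ⟨h1, h2⟩; exact ⟨h2, h1, lt_trans h2 hθ.2⟩
    rw [h1, integral_indicator measurableSet_Iio, hν,
      Measure.restrict_restrict measurableSet_Iio, hset]
  -- marginal integrability
  have hg1int : Integrable (fun θ => ∫ y in Set.Ioo θ 1,
      θ ^ p * (1 - y) ^ p * (f y - f θ) / (y - θ)) ν :=
    hH.integral_prod_left.congr (ae_restrict_of_forall_mem measurableSet_Ioo hsec1)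
  have hg2int : Integrable (fun θ => ∫ x in Set.Ioo 0 θ,
      x ^ p * (1 - θ) ^ p * (f θ - f x) / (θ - x)) ν :=
    hH.integral_prod_right.congr (ae_restrict_of_forall_mem measurableSet_Ioo hsec2)
  refine ⟨hg1int, hg2int, ?_⟩
  have hE1 : (∫ z, T.indicator G z ∂(ν.prod ν))
      = ∫ θ in I, ∫ y in Set.Ioo θ 1, θ ^ p * (1 - y) ^ p * (f y - f θ) / (y - θ) := by
    rw [MeasureTheory.integral_prod _ hH]
    exact integral_congr_ae (ae_restrict_of_forall_mem measurableSet_Ioo hsec1)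
  have hE2 : (∫ z, T.indicator G z ∂(ν.prod ν))
      = ∫ θ in I, ∫ x in Set.Ioo 0 θ, x ^ p * (1 - θ) ^ p * (f θ - f x) / (θ - x) := by
    rw [MeasureTheory.integral_prod_symm _ hH]
    exact integral_congr_ae (ae_restrict_of_forall_mem measurableSet_Ioo hsec2)
  rw [← hE1, hE2]


/-- The Beta(2s,2s) distribution is stationary for the single-site hidden-parameter model
of the generalized harmonic process with parameter `s` coupled to reservoirs with
parameters `θ_L = 0` and `θ_R = 1`. -/
theorem beta_stationary_single_site (s : ℝ) (hs : 0 < s)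
    (f : ℝ → ℝ) (hf : ContDiffOn ℝ 1 f (Set.Icc 0 1)) :
    IntegrableOn (fun q : ℝ × ℝ =>
      betaDens s q.1 * (q.2⁻¹ * (1 - q.2) ^ (2 * s - 1) *
        (f ((1 - q.2) * q.1) + f (q.2 + (1 - q.2) * q.1) - 2 * f q.1)))
      (Set.Ioo 0 1 ×ˢ Set.Ioo 0 1) volume ∧
    (∫ θ in Set.Ioo (0:ℝ) 1, betaDens s θ * ∫ u in Set.Ioo (0:ℝ) 1,
      u⁻¹ * (1 - u) ^ (2 * s - 1) *
        (f ((1 - u) * θ) + f (u + (1 - u) * θ) - 2 * f θ)) = 0 := by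
  have hp : (-1:ℝ) < 2 * s - 1 := by linarith
  set p : ℝ := 2 * s - 1 with hpdef
  have hfc : ContinuousOn f (Set.Icc 0 1) := hf.continuousOn
  obtain ⟨C, hC0, hC⟩ : ∃ C : ℝ, 0 ≤ C ∧ ∀ a ∈ Set.Icc (0:ℝ) 1, ∀ b ∈ Set.Icc (0:ℝ) 1,
      |f b - f a| ≤ C * |b - a| := by
    obtain ⟨C, hCb⟩ := (isCompact_Icc (a := (0:ℝ)) (b := 1)).exists_bound_of_continuousOn
      (hf.continuousOn_derivWithin (uniqueDiffOn_Icc one_pos) le_rfl)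
    refine ⟨max C 0, le_max_right _ _, fun a ha b hb => ?_⟩
    have h := Convex.norm_image_sub_le_of_norm_derivWithin_le (hf.differentiableOn one_ne_zero)
      (fun x hx => (hCb x hx).trans (le_max_left C 0)) (convex_Icc 0 1) ha hb
    simpa [Real.norm_eq_abs] using h
  set M : ℝ := ∫ v in Set.Ioo (0:ℝ) 1, v ^ p * (1 - v) ^ p with hM
  have hbetaEq : ∀ θ : ℝ, betaDens s θ = θ ^ p * (1 - θ) ^ p * M⁻¹ := by
    intro θ
    simp only [betaDens, hM, hpdef, div_eq_mul_inv]
  -- pointwise bound on the jump expression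
  have hDb : ∀ q : ℝ × ℝ, q ∈ (Set.Ioo (0:ℝ) 1 ×ˢ Set.Ioo (0:ℝ) 1) →
      |f ((1 - q.2) * q.1) + f (q.2 + (1 - q.2) * q.1) - 2 * f q.1| ≤ C * q.2 := by
    rintro ⟨θ, u⟩ ⟨hθ, hu⟩
    obtain ⟨hθ0, hθ1⟩ := hθ
    obtain ⟨hu0, hu1⟩ := hu
    have hθI : θ ∈ Set.Icc (0:ℝ) 1 := ⟨hθ0.le, hθ1.le⟩
    have hmapg : u + (1 - u) * θ ∈ Set.Icc (0:ℝ) 1 := by constructor <;> nlinarith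
    have hmaph : (1 - u) * θ ∈ Set.Icc (0:ℝ) 1 := by constructor <;> nlinarith
    have h1 := hC θ hθI _ hmaph
    have h2 := hC θ hθI _ hmapg
    have e1 : |(1 - u) * θ - θ| = u * θ := by
      rw [abs_sub_comm, abs_of_nonneg] <;> nlinarith
    have e2 : |u + (1 - u) * θ - θ| = u * (1 - θ) := by
      rw [abs_of_nonneg] <;> nlinarith
    rw [e1] at h1; rw [e2] at h2
    calc |f ((1 - u) * θ) + f (u + (1 - u) * θ) - 2 * f θ|
        = |(f ((1 - u) * θ) - f θ) + (f (u + (1 - u) * θ) - f θ)| := by ring_nf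
      _ ≤ |f ((1 - u) * θ) - f θ| + |f (u + (1 - u) * θ) - f θ| := abs_add_le _ _
      _ ≤ C * (u * θ) + C * (u * (1 - θ)) := add_le_add h1 h2
      _ = C * u := by ring
  -- Part 1 : integrability on the product
  have hpart1 : IntegrableOn (fun q : ℝ × ℝ =>
      betaDens s q.1 * (q.2⁻¹ * (1 - q.2) ^ p *
        (f ((1 - q.2) * q.1) + f (q.2 + (1 - q.2) * q.1) - 2 * f q.1)))
      (Set.Ioo 0 1 ×ˢ Set.Ioo 0 1) volume := by
    have hbetaInt : Integrable (fun θ : ℝ => betaDens s θ)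
        (volume.restrict (Set.Ioo 0 1)) := by
      have he : (fun θ : ℝ => betaDens s θ) = fun θ : ℝ => θ ^ p * (1 - θ) ^ p * M⁻¹ :=
        funext hbetaEq
      rw [he]
      exact (betaKer_integrableOn hp).mul_const _
    have hbnd2 : Integrable (fun z : ℝ × ℝ => |betaDens s z.1| * (C * (1 - z.2) ^ p))
        ((volume.restrict (Set.Ioo (0:ℝ) 1)).prod (volume.restrict (Set.Ioo (0:ℝ) 1))) :=
      hbetaInt.abs.mul_prod ((integrableOn_one_sub_rpow01 hp).const_mul C)
    have hsq : MeasurableSet (Set.Ioo (0:ℝ) 1 ×ˢ Set.Ioo (0:ℝ) 1) :=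
      measurableSet_Ioo.prod measurableSet_Ioo
    have hcont : ContinuousOn (fun q : ℝ × ℝ =>
        betaDens s q.1 * (q.2⁻¹ * (1 - q.2) ^ p *
          (f ((1 - q.2) * q.1) + f (q.2 + (1 - q.2) * q.1) - 2 * f q.1)))
        (Set.Ioo (0:ℝ) 1 ×ˢ Set.Ioo (0:ℝ) 1) := by
      have he : (fun q : ℝ × ℝ => betaDens s q.1)
          = fun q : ℝ × ℝ => q.1 ^ p * (1 - q.1) ^ p * M⁻¹ := funext fun q => hbetaEq q.1
      refine ContinuousOn.mul ?_ (ContinuousOn.mul (ContinuousOn.mul ?_ ?_) ?_)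
      · rw [he]
        refine ContinuousOn.mul (ContinuousOn.mul ?_ ?_) continuousOn_const
        · exact continuous_fst.continuousOn.rpow_const fun q hq => Or.inl (ne_of_gt hq.1.1)
        · exact (continuousOn_const.sub continuous_fst.continuousOn).rpow_const
            fun q hq => Or.inl (by have := hq.1.2; intro h; linarith [sub_eq_zero.1 h])
      · exact continuous_snd.continuousOn.inv₀ fun q hq => ne_of_gt hq.2.1
      · exact (continuousOn_const.sub continuous_snd.continuousOn).rpow_const
          fun q hq => Or.inl (by have := hq.2.2; intro h; linarith [sub_eq_zero.1 h])
      · refine ContinuousOn.sub (ContinuousOn.add ?_ ?_) ?_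
        · refine hfc.comp ((continuous_const.sub continuous_snd).mul
            continuous_fst).continuousOn fun q hq => ?_
          constructor <;> nlinarith [hq.1.1, hq.1.2, hq.2.1, hq.2.2]
        · refine hfc.comp (continuous_snd.add ((continuous_const.sub continuous_snd).mul
            continuous_fst)).continuousOn fun q hq => ?_
          constructor <;> nlinarith [hq.1.1, hq.1.2, hq.2.1, hq.2.2]
        · exact (continuousOn_const.mul
            (hfc.comp continuous_fst.continuousOn fun q hq => ⟨hq.1.1.le, hq.1.2.le⟩))
    unfold IntegrableOn
    rw [Measure.volume_eq_prod, ← Measure.prod_restrict]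
    refine Integrable.mono' hbnd2 ?_ ?_
    · rw [Measure.prod_restrict, ← Measure.volume_eq_prod]
      exact hcont.aestronglyMeasurable hsq
    · rw [Measure.prod_restrict, ← Measure.volume_eq_prod]
      refine (ae_restrict_iff' hsq).2 (ae_of_all _ fun q hq => ?_)
      rw [Real.norm_eq_abs, abs_mul]
      exact mul_le_mul_of_nonneg_left (bound_aux hq.2 (hDb q hq)) (abs_nonneg _)
  refine ⟨hpart1, ?_⟩
  -- Part 2 : the integral vanishes
  obtain ⟨hg1int, hg2int, hswap⟩ := fubini_core hp hC0 hfc hC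
  have hstep1 : (∫ θ in Set.Ioo (0:ℝ) 1, betaDens s θ * ∫ u in Set.Ioo (0:ℝ) 1,
      u⁻¹ * (1 - u) ^ p * (f ((1 - u) * θ) + f (u + (1 - u) * θ) - 2 * f θ))
      = M⁻¹ * ∫ θ in Set.Ioo (0:ℝ) 1, (θ ^ p * (1 - θ) ^ p * ∫ u in Set.Ioo (0:ℝ) 1,
        u⁻¹ * (1 - u) ^ p * (f ((1 - u) * θ) + f (u + (1 - u) * θ) - 2 * f θ)) := by
    rw [← integral_const_mul]
    refine setIntegral_congr_fun measurableSet_Ioo fun θ _ => ?_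
    rw [hbetaEq θ]; ring
  rw [hstep1]
  have hstep2 : (∫ θ in Set.Ioo (0:ℝ) 1, (θ ^ p * (1 - θ) ^ p * ∫ u in Set.Ioo (0:ℝ) 1,
      u⁻¹ * (1 - u) ^ p * (f ((1 - u) * θ) + f (u + (1 - u) * θ) - 2 * f θ)))
      = (∫ θ in Set.Ioo (0:ℝ) 1, ∫ y in Set.Ioo θ 1,
          θ ^ p * (1 - y) ^ p * (f y - f θ) / (y - θ))
        - ∫ θ in Set.Ioo (0:ℝ) 1, ∫ x in Set.Ioo 0 θ,
            x ^ p * (1 - θ) ^ p * (f θ - f x) / (θ - x) := by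
    rw [← integral_sub hg1int hg2int]
    exact setIntegral_congr_fun measurableSet_Ioo fun θ hθ =>
      key_pointwise hp hC0 hfc hC hθ
  rw [hstep2, hswap, sub_self, mul_zero]
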